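/- Let 1 ≤ d ≤ d' be integers and ω = e^{2πi/d}. For l ∈ {0,…,d'−1} and a ∈ {0,…,d−1} define Q_l^a ∈ M_{d×d'} by Q_l^a(r,j) = ω^{a·r} if j ≡ r + l (mod d') and 0 otherwise (rows r ∈ {0,…,d−1}, columns j ∈ {0,…,d'−1}). Then each Q_l^a satisfies Q_l^a·(Q_l^a)ᴴ = I_d, and Tr((Q_l^a)ᴴ Q_{l'}^{a'}) = d·δ_{l l'}·δ_{a a'} for all l, l' ∈ {0,…,d'−1} and a, a' ∈ {0,…,d−1}. Consequently, the d·d' matrices {Q_l^a} form an SV1Bd in M_{d×d'}, i.e., a maximally entangled basis of ℂ^d ⊗ ℂ^{d'} under vectorization. -/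

import Mathlib

open Matrix

/-- The matrix `Q_l^a ∈ M_{d×d'}` with `Q_l^a(r,j) = ω^{a·r}` (`ω = e^{2πi/d}`) if
`j ≡ r + l (mod d')`, and `0` otherwise. -/
noncomputable def Qmat (d d' : ℕ) (l a : ℕ) : Matrix (Fin d) (Fin d') ℂ :=
  fun r j => if (j : ℕ) % d' = ((r : ℕ) + l) % d'
    then Complex.exp (2 * Real.pi * Complex.I / d) ^ (a * (r : ℕ)) else 0

/-- for `1 ≤ d ≤ d'`, the matrices `Q_l^a` (`l ∈ [d']*`, `a ∈ [d]*`)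
satisfy `Q_l^a (Q_l^a)ᴴ = I_d` and `Tr((Q_l^a)ᴴ Q_{l'}^{a'}) = d·δ_{ll'}δ_{aa'}`;
hence the `d·d'` matrices `{Q_l^a}` form an SV1Bd in `M_{d×d'}`, i.e., a maximally
entangled basis of `ℂ^d ⊗ ℂ^{d'}`. -/
theorem Qmat_meb (d d' : ℕ) (hd : 1 ≤ d) (hdd : d ≤ d') :
    (∀ (l : Fin d') (a : Fin d),
      Qmat d d' (l : ℕ) (a : ℕ) * (Qmat d d' (l : ℕ) (a : ℕ))ᴴ = 1) ∧
    (∀ (l l' : Fin d') (a a' : Fin d),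
      ((Qmat d d' (l : ℕ) (a : ℕ))ᴴ * Qmat d d' (l' : ℕ) (a' : ℕ)).trace =
        if l = l' ∧ a = a' then (d : ℂ) else 0) := by
  have hd0 : 0 < d := hd
  have hd'0 : 0 < d' := lt_of_lt_of_le hd0 hdd
  set ζ : ℂ := Complex.exp (2 * Real.pi * Complex.I / d) with hζdef
  have hζ : IsPrimitiveRoot ζ d := Complex.isPrimitiveRoot_exp d hd0.ne'
  have hζd : ζ ^ d = 1 := hζ.pow_eq_one
  have hζne : ζ ≠ 0 := fun h => by simp [h, zero_pow hd0.ne'] at hζd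
  have habs : ‖ζ‖ = 1 := by
    have harg : (2 * Real.pi * Complex.I / d) = ((2 * Real.pi / d : ℝ) : ℂ) * Complex.I := by
      push_cast; ring
    rw [hζdef, harg, Complex.norm_exp_ofReal_mul_I]
  have hstar : (starRingEnd ℂ) ζ = ζ⁻¹ := (Complex.inv_eq_conj habs).symm
  have hinv : ∀ n : ℕ, (starRingEnd ℂ) (ζ ^ n) = (ζ ^ n)⁻¹ := by
    intro n; rw [map_pow, hstar, inv_pow]
  -- description of Qmat entries
  have hQ : ∀ (l a : ℕ) (r : Fin d) (j : Fin d'),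
      Qmat d d' l a r j =
        if j = (⟨((r : ℕ) + l) % d', Nat.mod_lt _ hd'0⟩ : Fin d')
          then ζ ^ (a * (r : ℕ)) else 0 := by
    intro l a r j
    unfold Qmat
    rw [← hζdef, Nat.mod_eq_of_lt j.isLt]
    simp [Fin.ext_iff]
  -- cancellation mod d'
  have hcancel : ∀ x y c : ℕ, (x + c) % d' = (y + c) % d' → x % d' = y % d' := by
    intro x y c h
    exact Nat.ModEq.add_right_cancel' c h
  -- sum over j of a product of deltas
  have hsum : ∀ (x y : Fin d') (u v : ℂ),
      (∑ j : Fin d', (if j = x then u else 0) * (if j = y then v else 0)) =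
        if x = y then u * v else 0 := by
    intro x y u v
    by_cases hxy : x = y
    · subst hxy
      rw [if_pos rfl]
      rw [Finset.sum_eq_single x]
      · simp
      · intro b _ hb; simp [hb]
      · simp
    · rw [if_neg hxy]
      apply Finset.sum_eq_zero
      intro j _
      by_cases h1 : j = x
      · subst h1; simp [hxy]
      · simp [h1]
  have hsum2 : ∀ (x y : Fin d') (u v : ℂ),
      (∑ j : Fin d', (if j = x then u else 0) *
          (starRingEnd ℂ) (if j = y then v else 0)) =
        if x = y then u * (starRingEnd ℂ) v else 0 := by
    intro x y u v
    rw [← hsum x y u ((starRingEnd ℂ) v)]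
    exact Finset.sum_congr rfl (fun j _ => by rw [apply_ite (starRingEnd ℂ), map_zero])
  have hsum3 : ∀ (x y : Fin d') (u v : ℂ),
      (∑ j : Fin d', (starRingEnd ℂ) (if j = x then u else 0) *
          (if j = y then v else 0)) =
        if x = y then (starRingEnd ℂ) u * v else 0 := by
    intro x y u v
    rw [← hsum x y ((starRingEnd ℂ) u) v]
    exact Finset.sum_congr rfl (fun j _ => by rw [apply_ite (starRingEnd ℂ), map_zero])
  -- the exponential character sum
  have key : ∀ a a' : Fin d,
      (∑ r : Fin d, (starRingEnd ℂ) (ζ ^ ((a : ℕ) * (r : ℕ))) * ζ ^ ((a' : ℕ) * (r : ℕ)))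
        = if a = a' then (d : ℂ) else 0 := by
    intro a a'
    have h1nat : (d - 1) * (a : ℕ) + (a : ℕ) = d * (a : ℕ) := by
      rcases Nat.exists_eq_add_of_le hd with ⟨e, he⟩
      subst he
      have he1 : 1 + e - 1 = e := by omega
      rw [he1]; ring
    set k : ℕ := (d - 1) * (a : ℕ) + (a' : ℕ) with hk
    have hka : k + (a : ℕ) = d * (a : ℕ) + (a' : ℕ) := by
      calc k + (a : ℕ) = (d - 1) * (a : ℕ) + (a' : ℕ) + (a : ℕ) := by rw [hk]
        _ = ((d - 1) * (a : ℕ) + (a : ℕ)) + (a' : ℕ) := by ring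
        _ = d * (a : ℕ) + (a' : ℕ) := by rw [h1nat]
    have hterm : ∀ r : Fin d,
        (starRingEnd ℂ) (ζ ^ ((a : ℕ) * (r : ℕ))) * ζ ^ ((a' : ℕ) * (r : ℕ))
          = (ζ ^ k) ^ (r : ℕ) := by
      intro r
      rw [hinv]
      have h1 : ζ ^ ((d - 1) * (a : ℕ) * (r : ℕ)) * ζ ^ ((a : ℕ) * (r : ℕ)) = 1 := by
        rw [← pow_add]
        have h2 : (d - 1) * (a : ℕ) * (r : ℕ) + (a : ℕ) * (r : ℕ)
            = d * ((a : ℕ) * (r : ℕ)) := by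
          calc (d - 1) * (a : ℕ) * (r : ℕ) + (a : ℕ) * (r : ℕ)
              = ((d - 1) * (a : ℕ) + (a : ℕ)) * (r : ℕ) := by ring
            _ = d * (a : ℕ) * (r : ℕ) := by rw [h1nat]
            _ = d * ((a : ℕ) * (r : ℕ)) := by ring
        rw [h2, pow_mul, hζd, one_pow]
      have h2 : (ζ ^ ((a : ℕ) * (r : ℕ)))⁻¹ = ζ ^ ((d - 1) * (a : ℕ) * (r : ℕ)) :=
        (eq_inv_of_mul_eq_one_left h1).symm
      rw [h2, ← pow_mul, ← pow_add]
      congr 1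
      rw [hk]; ring
    rw [Finset.sum_congr rfl (fun r _ => hterm r)]
    rw [Fin.sum_univ_eq_sum_range (fun i => (ζ ^ k) ^ i) d]
    by_cases haa : a = a'
    · subst haa
      have hkd : k = d * (a : ℕ) := by
        rw [hk, ← h1nat]
      have hone : ζ ^ k = 1 := by rw [hkd, pow_mul, hζd, one_pow]
      simp [hone]
    · rw [if_neg haa]
      have hne1 : ζ ^ k ≠ 1 := by
        intro h1
        have hdvd : d ∣ k := (hζ.pow_eq_one_iff_dvd k).mp h1
        obtain ⟨c, hc⟩ := hdvd
        have hmod : (d * c + (a : ℕ)) % d = (d * (a : ℕ) + (a' : ℕ)) % d := by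
          rw [← hc, hka]
        rw [Nat.mul_add_mod, Nat.mul_add_mod] at hmod
        rw [Nat.mod_eq_of_lt a.isLt, Nat.mod_eq_of_lt a'.isLt] at hmod
        exact haa (Fin.ext hmod)
      rw [geom_sum_eq hne1]
      have hpd : (ζ ^ k) ^ d = 1 := by
        rw [← pow_mul, mul_comm, pow_mul, hζd, one_pow]
      rw [hpd]
      simp
  constructor
  · intro l a
    ext r r'
    simp only [Matrix.mul_apply, conjTranspose_apply, hQ, RCLike.star_def]
    rw [hsum2]
    have hindex : ((⟨((r : ℕ) + (l : ℕ)) % d', Nat.mod_lt _ hd'0⟩ : Fin d') =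
        (⟨((r' : ℕ) + (l : ℕ)) % d', Nat.mod_lt _ hd'0⟩ : Fin d')) ↔ r = r' := by
      constructor
      · intro h
        have h0 : ((r : ℕ) + (l : ℕ)) % d' = ((r' : ℕ) + (l : ℕ)) % d' :=
          Fin.ext_iff.mp h
        have h1 := hcancel (r : ℕ) (r' : ℕ) (l : ℕ) h0
        rw [Nat.mod_eq_of_lt (lt_of_lt_of_le r.isLt hdd),
          Nat.mod_eq_of_lt (lt_of_lt_of_le r'.isLt hdd)] at h1
        exact Fin.ext h1
      · intro h; subst h; rfl
    by_cases hrr : r = r'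
    · subst hrr
      rw [if_pos (hindex.mpr rfl), hinv, mul_inv_cancel₀ (pow_ne_zero _ hζne),
        Matrix.one_apply_eq]
    · rw [if_neg (fun h => hrr (hindex.mp h)), Matrix.one_apply_ne hrr]
  · intro l l' a a'
    rw [Matrix.trace]
    simp only [Matrix.diag_apply, Matrix.mul_apply, conjTranspose_apply, hQ,
      RCLike.star_def]
    rw [Finset.sum_comm]
    have hrow : ∀ r : Fin d,
        (∑ j : Fin d',
          (starRingEnd ℂ) (if j = (⟨((r : ℕ) + (l : ℕ)) % d', Nat.mod_lt _ hd'0⟩ : Fin d')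
            then ζ ^ ((a : ℕ) * (r : ℕ)) else 0) *
          (if j = (⟨((r : ℕ) + (l' : ℕ)) % d', Nat.mod_lt _ hd'0⟩ : Fin d')
            then ζ ^ ((a' : ℕ) * (r : ℕ)) else 0)) =
        if l = l' then (starRingEnd ℂ) (ζ ^ ((a : ℕ) * (r : ℕ))) *
          ζ ^ ((a' : ℕ) * (r : ℕ)) else 0 := by
      intro r
      rw [hsum3]
      have hindex : ((⟨((r : ℕ) + (l : ℕ)) % d', Nat.mod_lt _ hd'0⟩ : Fin d') =
          (⟨((r : ℕ) + (l' : ℕ)) % d', Nat.mod_lt _ hd'0⟩ : Fin d')) ↔ l = l' := by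
        constructor
        · intro h
          have h0 : ((r : ℕ) + (l : ℕ)) % d' = ((r : ℕ) + (l' : ℕ)) % d' :=
            Fin.ext_iff.mp h
          rw [Nat.add_comm (r : ℕ) (l : ℕ), Nat.add_comm (r : ℕ) (l' : ℕ)] at h0
          have h1 := hcancel (l : ℕ) (l' : ℕ) (r : ℕ) h0
          rw [Nat.mod_eq_of_lt l.isLt, Nat.mod_eq_of_lt l'.isLt] at h1
          exact Fin.ext h1
        · intro h; subst h; rfl
      by_cases hll : l = l'
      · rw [if_pos (hindex.mpr hll), if_pos hll]
      · rw [if_neg (fun h => hll (hindex.mp h)), if_neg hll]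
    rw [Finset.sum_congr rfl (fun r _ => hrow r)]
    by_cases hll : l = l'
    · simp only [if_pos hll]
      rw [key a a']
      simp [hll]
    · simp [hll]
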